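/- Suppose λ: primes → ℝ satisfies |λ(p)| ≤ 2 and ∑_{p ≤ x} λ(p)²/p = log log x + O(1) as x → ∞ (Sato–Tate / symmetric square on average), and suppose ∑_{p ≤ x} log(1 − λ(p)p^{-1/2} + p^{-1}) = O(1) as x → ∞ (DRH for the degree-2 Euler product at s = 1/2). Then ∑_{p ≤ x} λ(p)/√p ~ (1/2)·log log x as x → ∞. -/

import Mathlib

set_option maxHeartbeats 1000000
open Finset Filter MeasureTheory



/-- primes ≤ N -/
def mP (N : ℕ) : Finset ℕ := (Finset.range (N+1)).filter Nat.Prime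

lemma mem_mP {N p : ℕ} : p ∈ mP N ↔ p ≤ N ∧ p.Prime := by
  simp [mP, Finset.mem_filter, Nat.lt_succ_iff, and_comm]

lemma log_le_two_sqrt {y : ℝ} (hy : 0 ≤ y) : Real.log y ≤ 2 * Real.sqrt y := by
  rcases eq_or_lt_of_le hy with h | h
  · simp [← h]
  have h1 : Real.log y = 2 * Real.log (Real.sqrt y) := (Real.log_sqrt hy).symm ▸ by ring
  rw [h1]
  have := Real.log_le_sub_one_of_pos (Real.sqrt_pos.mpr h)
  nlinarith [Real.sqrt_nonneg y]

lemma summable_aux : Summable (fun n : ℕ => ((n : ℝ) * Real.sqrt n)⁻¹) := by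
  have h : (fun n : ℕ => ((n : ℝ) * Real.sqrt n)⁻¹)
      = fun n : ℕ => ((n : ℝ) ^ ((3:ℝ)/2))⁻¹ := by
    funext n
    rcases Nat.eq_zero_or_pos n with rfl | hn
    · simp
    have hn' : (0:ℝ) < n := by exact_mod_cast hn
    rw [show ((3:ℝ)/2) = 1 + 1/2 by norm_num, Real.rpow_add hn', Real.rpow_one,
      ← Real.sqrt_eq_rpow]
  rw [h]
  exact (Real.summable_nat_rpow_inv).mpr (by norm_num)

lemma theta_le (N : ℕ) : ∑ p ∈ mP N, Real.log p ≤ N * Real.log 4 := by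
  have h0 : ∀ p ∈ mP N, (p:ℕ) ≠ 0 := fun p hp => (mem_mP.mp hp).2.pos.ne'
  have h1 : ∑ p ∈ mP N, Real.log p = Real.log (primorial N) := by
    rw [primorial]
    rw [show ∏ p ∈ Finset.range (N+1) with p.Prime, p = ∏ p ∈ mP N, p from rfl]
    push_cast [Nat.cast_prod]
    rw [Real.log_prod (fun p hp => by exact_mod_cast Nat.cast_ne_zero.mpr (h0 p hp))]
  rw [h1]
  calc Real.log (primorial N) ≤ Real.log (4 ^ N) := by
        apply Real.log_le_log (by exact_mod_cast primorial_pos N)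
        exact_mod_cast primorial_le_4_pow N
    _ = N * Real.log 4 := by rw [Real.log_pow]


lemma legendre {p N b : ℕ} (hp : p.Prime) (hb : Nat.log p N < b) :
    (Nat.factorial N).factorization p = ∑ i ∈ Ico 1 b, N / p ^ i := by
  have hN : Nat.factorial N ≠ 0 := Nat.factorial_ne_zero N
  apply le_antisymm
  · have h := (Nat.Prime.pow_dvd_iff_le_factorization hp hN
      (k := (Nat.factorial N).factorization p)).mpr le_rfl
    exact (Nat.Prime.pow_dvd_factorial_iff hp hb).mp h
  · rw [← Nat.Prime.pow_dvd_iff_le_factorization hp hN,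
      Nat.Prime.pow_dvd_factorial_iff hp hb]

lemma log_factorial_eq (N : ℕ) :
    Real.log (Nat.factorial N)
      = ∑ p ∈ mP N, ((Nat.factorial N).factorization p : ℝ) * Real.log p := by
  have hN : Nat.factorial N ≠ 0 := Nat.factorial_ne_zero N
  have hsupp : (Nat.factorial N).factorization.support = mP N := by
    ext p
    rw [Nat.support_factorization, Nat.mem_primeFactors, mem_mP]
    constructor
    · rintro ⟨hp, hd, -⟩
      exact ⟨(Nat.Prime.dvd_factorial hp).mp hd, hp⟩
    · rintro ⟨hle, hp⟩
      exact ⟨hp, (Nat.Prime.dvd_factorial hp).mpr hle, hN⟩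
  conv_lhs => rw [← Nat.factorization_prod_pow_eq_self hN]
  rw [Finsupp.prod]
  push_cast
  rw [Real.log_prod]
  · rw [hsupp]
    apply Finset.sum_congr rfl
    intro p hp
    rw [Real.log_pow]
  · intro p hp
    rw [hsupp] at hp
    have := (mem_mP.mp hp).2.pos
    positivity

lemma log_factorial_le (N : ℕ) : Real.log (Nat.factorial N) ≤ N * Real.log N := by
  calc Real.log (Nat.factorial N) ≤ Real.log ((N:ℕ) ^ N) :=
        Real.log_le_log (by exact_mod_cast Nat.factorial_pos N)
          (by exact_mod_cast Nat.factorial_le_pow N)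
    _ = N * Real.log N := by push_cast; rw [Real.log_pow]

lemma le_log_factorial (N : ℕ) (hN : 1 ≤ N) :
    (N:ℝ) * Real.log N - N ≤ Real.log (Nat.factorial N) := by
  have hNpos : (0:ℝ) < N := by exact_mod_cast hN
  have h1 : ((N:ℝ)) ^ N / (Nat.factorial N) ≤ Real.exp N := by
    calc ((N:ℝ)) ^ N / (Nat.factorial N)
        ≤ ∑ i ∈ Finset.range (N+1), (N:ℝ) ^ i / (Nat.factorial i) := by
          apply Finset.single_le_sum (f := fun i => (N:ℝ) ^ i / (Nat.factorial i))
          · intro i _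
            positivity
          · exact Finset.self_mem_range_succ N
      _ ≤ Real.exp N := Real.sum_le_exp_of_nonneg hNpos.le _
  have h2 := Real.log_le_log (by positivity) h1
  rw [Real.log_div (by positivity) (by exact_mod_cast Nat.factorial_ne_zero N),
    Real.log_pow, Real.log_exp] at h2
  linarith

lemma sum_inv_nsqrt_le (c : ℝ) (hc : 0 ≤ c) (s : Finset ℕ) :
    ∑ p ∈ s, c * ((p:ℝ) * Real.sqrt p)⁻¹ ≤ c * ∑' n : ℕ, ((n:ℝ) * Real.sqrt n)⁻¹ := by
  rw [← Finset.mul_sum]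
  apply mul_le_mul_of_nonneg_left _ hc
  apply Summable.sum_le_tsum _ (fun i _ => by positivity) summable_aux

lemma mertens1 : ∃ c : ℝ, 0 ≤ c ∧ ∀ N : ℕ, 2 ≤ N →
    |(∑ p ∈ mP N, Real.log p / p) - Real.log N| ≤ c := by
  set C0 : ℝ := 4 * ∑' n : ℕ, ((n:ℝ) * Real.sqrt n)⁻¹ with hC0
  have hC0nn : 0 ≤ C0 := by
    apply mul_nonneg (by norm_num)
    apply tsum_nonneg; intro n; positivity
  refine ⟨Real.log 4 + 1 + C0, by positivity, ?_⟩
  intro N hN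
  have hNpos : (0:ℝ) < N := by exact_mod_cast Nat.lt_of_lt_of_le Nat.zero_lt_two hN
  have hlogfac := log_factorial_eq N
  -- per-prime facts
  have hfacts : ∀ p ∈ mP N,
      (N:ℝ)/p - 1 ≤ ((Nat.factorial N).factorization p : ℝ) ∧
      ((Nat.factorial N).factorization p : ℝ) ≤ (N:ℝ)/p + 2*N/(p:ℝ)^2 := by
    intro p hp
    obtain ⟨hpN, hpp⟩ := mem_mP.mp hp
    have hp2 : 2 ≤ p := hpp.two_le
    have hppos : (0:ℝ) < p := by exact_mod_cast hpp.pos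
    have hleg := legendre (N := N) hpp (Nat.lt_succ_self _)
    constructor
    · -- lower: the i = 1 term
      have h1m : 1 ∈ Ico 1 (Nat.log p N + 1) := by
        rw [mem_Ico]
        refine ⟨le_refl 1, ?_⟩
        have : 0 < Nat.log p N := Nat.log_pos hpp.one_lt hpN
        omega
      have hsingle : N / p ≤ ∑ i ∈ Ico 1 (Nat.log p N + 1), N / p ^ i := by
        have := Finset.single_le_sum (f := fun i => N / p ^ i)
          (fun i _ => Nat.zero_le _) h1m
        simpa using this
      have h2 : (N / p : ℕ) ≤ ((Nat.factorial N).factorization p) := by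
        rw [hleg]; exact hsingle
      have h3 : (N:ℝ)/p - 1 ≤ ((N / p : ℕ) : ℝ) := by
        have hdm := Nat.div_add_mod N p
        have hml := Nat.mod_lt N (Nat.lt_of_lt_of_le Nat.zero_lt_two hp2)
        have h4n : N < (N / p + 1) * p := by
          have hx : (N / p + 1) * p = p * (N / p) + p := by ring
          omega
        have h4 : (N:ℝ) < ((N / p : ℕ) + 1) * p := by exact_mod_cast h4n
        rw [div_sub_one hppos.ne', div_le_iff₀ hppos]
        push_cast
        nlinarith
      exact h3.trans (by exact_mod_cast h2)
    · -- upper: geometric bound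
      have h2 : ((Nat.factorial N).factorization p) ≤ N / (p - 1) := by
        rw [hleg]; exact Nat.geom_sum_Ico_le hp2 _ _
      have h3 : (((Nat.factorial N).factorization p : ℕ) : ℝ) ≤ (N:ℝ) / ((p:ℝ) - 1) := by
        calc (((Nat.factorial N).factorization p : ℕ) : ℝ) ≤ ((N / (p-1) : ℕ) : ℝ) := by
              exact_mod_cast h2
          _ ≤ (N:ℝ) / ((p - 1 : ℕ) : ℝ) := Nat.cast_div_le
          _ = (N:ℝ) / ((p:ℝ) - 1) := by
              congr 1
              have : 1 ≤ p := hpp.one_le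
              push_cast [Nat.cast_sub this]
              ring
      have hp2' : (2:ℝ) ≤ p := by exact_mod_cast hp2
      refine h3.trans ?_
      rw [div_le_iff₀ (by linarith : (0:ℝ) < (p:ℝ) - 1)]
      rw [div_add_div _ _ hppos.ne' (by positivity), div_mul_eq_mul_div,
        le_div_iff₀ (by positivity)]
      nlinarith [mul_nonneg (mul_nonneg hNpos.le hppos.le)
        (by linarith : (0:ℝ) ≤ (p:ℝ) - 2)]
  -- theta bound
  have htheta : ∑ p ∈ mP N, Real.log p ≤ N * Real.log 4 := theta_le N
  have hlognn : ∀ p ∈ mP N, 0 ≤ Real.log p := fun p hp =>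
    Real.log_nonneg (by exact_mod_cast (mem_mP.mp hp).2.one_le)
  -- upper bound on sum log p / p
  have hub : ∑ p ∈ mP N, Real.log p / p ≤ Real.log N + Real.log 4 := by
    have h1 : ∑ p ∈ mP N, ((N:ℝ)/p - 1) * Real.log p ≤ Real.log (Nat.factorial N) := by
      rw [hlogfac]
      apply Finset.sum_le_sum
      intro p hp
      exact mul_le_mul_of_nonneg_right (hfacts p hp).1 (hlognn p hp)
    have h2 : ∑ p ∈ mP N, ((N:ℝ)/p - 1) * Real.log p
        = (N:ℝ) * (∑ p ∈ mP N, Real.log p / p) - ∑ p ∈ mP N, Real.log p := by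
      rw [Finset.mul_sum, ← Finset.sum_sub_distrib]
      apply Finset.sum_congr rfl
      intro p hp
      have hppos : (0:ℝ) < p := by exact_mod_cast (mem_mP.mp hp).2.pos
      field_simp
    have h3 := log_factorial_le N
    rw [h2] at h1
    have h4 : (N:ℝ) * (∑ p ∈ mP N, Real.log p / p) ≤ N * Real.log N + N * Real.log 4 := by
      linarith
    have h4' : (N:ℝ) * (∑ p ∈ mP N, Real.log p / p)
        ≤ (N:ℝ) * (Real.log N + Real.log 4) := by linarith
    exact le_of_mul_le_mul_left h4' hNpos
  -- lower bound
  have hlb : Real.log N - 1 - C0 ≤ ∑ p ∈ mP N, Real.log p / p := by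
    have h1 : Real.log (Nat.factorial N)
        ≤ ∑ p ∈ mP N, ((N:ℝ)/p + 2*N/(p:ℝ)^2) * Real.log p := by
      rw [hlogfac]
      apply Finset.sum_le_sum
      intro p hp
      exact mul_le_mul_of_nonneg_right (hfacts p hp).2 (hlognn p hp)
    have h2 : ∑ p ∈ mP N, ((N:ℝ)/p + 2*N/(p:ℝ)^2) * Real.log p
        ≤ (N:ℝ) * (∑ p ∈ mP N, Real.log p / p) + N * C0 := by
      have hsplit : ∑ p ∈ mP N, ((N:ℝ)/p + 2*N/(p:ℝ)^2) * Real.log p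
          = (N:ℝ) * (∑ p ∈ mP N, Real.log p / p)
            + (N:ℝ) * ∑ p ∈ mP N, 2 * Real.log p / (p:ℝ)^2 := by
        rw [Finset.mul_sum, Finset.mul_sum, ← Finset.sum_add_distrib]
        apply Finset.sum_congr rfl
        intro p hp
        have hppos : (0:ℝ) < p := by exact_mod_cast (mem_mP.mp hp).2.pos
        field_simp
      rw [hsplit]
      have h3 : ∑ p ∈ mP N, 2 * Real.log p / (p:ℝ)^2 ≤ C0 := by
        calc ∑ p ∈ mP N, 2 * Real.log p / (p:ℝ)^2
            ≤ ∑ p ∈ mP N, 4 * ((p:ℝ) * Real.sqrt p)⁻¹ := by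
              apply Finset.sum_le_sum
              intro p hp
              have hppos : (0:ℝ) < p := by exact_mod_cast (mem_mP.mp hp).2.pos
              have hlog := log_le_two_sqrt (le_of_lt hppos)
              have hsq : Real.sqrt p * Real.sqrt p = (p:ℝ) := Real.mul_self_sqrt hppos.le
              have hsqpos : 0 < Real.sqrt p := Real.sqrt_pos.mpr hppos
              rw [div_le_iff₀ (by positivity)]
              have : ((p:ℝ) * Real.sqrt p)⁻¹ * (p:ℝ)^2 = Real.sqrt p := by
                field_simp
                nlinarith
              rw [mul_assoc, this]
              nlinarith
          _ ≤ 4 * ∑' n : ℕ, ((n:ℝ) * Real.sqrt n)⁻¹ := sum_inv_nsqrt_le 4 (by norm_num) _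
          _ = C0 := hC0.symm
      nlinarith
    have h4 := le_log_factorial N (by omega)
    have h5 : (N:ℝ) * Real.log N - N ≤ (N:ℝ) * (∑ p ∈ mP N, Real.log p / p) + N * C0 := by
      linarith
    have h6 : (N:ℝ) * (Real.log N - 1 - C0) ≤ (N:ℝ) * (∑ p ∈ mP N, Real.log p / p) := by
      nlinarith
    exact le_of_mul_le_mul_left (by linarith [h6]) hNpos
  have hlog4 : 0 ≤ Real.log 4 := Real.log_nonneg (by norm_num)
  rw [abs_sub_le_iff]
  constructor
  · linarith
  · linarith

noncomputable def cc : ℕ → ℝ := fun k => if k.Prime then Real.log k / k else 0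

lemma cc_nonneg (k : ℕ) : 0 ≤ cc k := by
  unfold cc
  split
  · have : (1:ℝ) ≤ k := by exact_mod_cast (by assumption : Nat.Prime k).one_le
    have := Real.log_nonneg this
    positivity
  · exact le_rfl

lemma A_eq (n : ℕ) : ∑ k ∈ Icc 0 n, cc k = ∑ p ∈ mP n, Real.log p / p := by
  have h : Icc 0 n = Finset.range (n+1) := by
    rw [← Finset.Ico_add_one_right_eq_Icc, Nat.Ico_zero_eq_range]
  rw [h, mP, Finset.sum_filter]
  rfl

lemma derivInv (t : ℝ) (ht : 2 ≤ t) :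
    HasDerivAt (fun y : ℝ => (Real.log y)⁻¹) (-(t⁻¹ / Real.log t ^ 2)) t := by
  have h0 : t ≠ 0 := by linarith
  have hlog : Real.log t ≠ 0 := ne_of_gt (Real.log_pos (by linarith))
  have h1 := (Real.hasDerivAt_log h0).inv hlog
  rw [← neg_div]; exact h1

lemma contJ {x : ℝ} : ContinuousOn (fun t : ℝ => t⁻¹ / Real.log t ^ 2) (Set.Icc 2 x) := by
  have h1 : ContinuousOn (fun t : ℝ => t⁻¹) (Set.Icc 2 x) :=
    continuousOn_id.inv₀ (fun t ht => by have := ht.1; simp only [id]; intro h; rw [h] at this; linarith)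
  have h2 : ContinuousOn Real.log (Set.Icc 2 x) :=
    Real.continuousOn_log.mono (by intro t ht; simp; intro h; rw [h] at ht; have := ht.1; linarith)
  exact h1.div (h2.pow 2) (fun t ht =>
    pow_ne_zero _ (ne_of_gt (Real.log_pos (by have := ht.1; linarith))))

lemma mertens2 : ∃ c : ℝ, ∀ x : ℝ, 3 ≤ x →
    |(∑ p ∈ mP ⌊x⌋₊, 1/(p:ℝ)) - Real.log (Real.log x)| ≤ c := by
  obtain ⟨c1, hc1nn, hM1⟩ := mertens1
  refine ⟨(1 + c1 / Real.log 3) + (c1+1) / Real.log 2 + |Real.log (Real.log 2)|, ?_⟩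
  intro x hx
  set N := ⌊x⌋₊ with hN
  have hN3 : 3 ≤ N := Nat.le_floor (by exact_mod_cast hx)
  have hNx : (N:ℝ) ≤ x := Nat.floor_le (by linarith)
  have hxpos : (0:ℝ) < x := by linarith
  have hlogx : Real.log 3 ≤ Real.log x := Real.log_le_log (by norm_num) hx
  have hlog3 : (1:ℝ) < Real.log 3 := by
    have h := Real.exp_one_lt_d9
    have : Real.exp 1 < 3 := by linarith
    calc (1:ℝ) = Real.log (Real.exp 1) := (Real.log_exp 1).symm
      _ < Real.log 3 := Real.log_lt_log (Real.exp_pos 1) this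
  have hlogxpos : (0:ℝ) < Real.log x := by linarith
  -- Abel summation
  have habel := sum_mul_eq_sub_sub_integral_mul cc (f := fun t : ℝ => (Real.log t)⁻¹)
    (a := 2) (b := x) (by norm_num) (by linarith)
    (fun t ht => ((derivInv t ht.1).differentiableAt))
    ?hfint
  case hfint =>
    have heq : Set.EqOn (fun t : ℝ => -(t⁻¹ / Real.log t ^ 2))
        (deriv (fun y : ℝ => (Real.log y)⁻¹)) (Set.Icc 2 x) :=
      fun t ht => ((derivInv t ht.1).deriv).symm
    exact (((contJ).neg).integrableOn_compact isCompact_Icc).congr_fun heq measurableSet_Icc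
  rw [Nat.floor_ofNat] at habel
  set J : ℝ → ℝ := fun t => t⁻¹ / Real.log t ^ 2 with hJ
  set A : ℕ → ℝ := fun n => ∑ k ∈ Icc 0 n, cc k with hA
  have hlog2pos : (0:ℝ) < Real.log 2 := Real.log_pos (by norm_num)
  -- A 2 = log 2 / 2
  have hA2 : A 2 = Real.log 2 / 2 := by
    have h2 : mP 2 = {2} := by decide
    show ∑ k ∈ Icc 0 2, cc k = _
    rw [A_eq, h2, Finset.sum_singleton]
    norm_num
  have hhalf : (Real.log 2)⁻¹ * A 2 = 1/2 := by
    rw [hA2]; field_simp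
  -- LHS is B - 1/2
  set B : ℝ := ∑ p ∈ mP N, 1/(p:ℝ) with hB
  have hsplit : mP N = insert 2 ((Finset.Ioc 2 N).filter Nat.Prime) := by
    ext q
    simp only [mem_mP, Finset.mem_insert, Finset.mem_filter, Finset.mem_Ioc]
    constructor
    · rintro ⟨hqN, hq⟩
      rcases eq_or_ne q 2 with rfl | hne
      · exact Or.inl rfl
      · exact Or.inr ⟨⟨lt_of_le_of_ne hq.two_le (Ne.symm hne), hqN⟩, hq⟩
    · rintro (rfl | ⟨⟨h2q, hqN⟩, hq⟩)
      · exact ⟨by omega, Nat.prime_two⟩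
      · exact ⟨hqN, hq⟩
  have hLHS : ∑ k ∈ Finset.Ioc 2 N, (Real.log (k:ℝ))⁻¹ * cc k = B - 1/2 := by
    have h1 : ∀ k ∈ Finset.Ioc 2 N, (Real.log (k:ℝ))⁻¹ * cc k
        = (if k.Prime then 1/(k:ℝ) else 0) := by
      intro k hk
      obtain ⟨h2k, hkN⟩ := Finset.mem_Ioc.mp hk
      have hk1 : (1:ℝ) < k := by exact_mod_cast Nat.lt_of_lt_of_le Nat.one_lt_two h2k.le
      have hlogk : Real.log k ≠ 0 := ne_of_gt (Real.log_pos hk1)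
      unfold cc
      split
      · field_simp
      · simp
    rw [Finset.sum_congr rfl h1, ← Finset.sum_filter, hB, hsplit, Finset.sum_insert (by simp)]
    push_cast
    ring
  -- the integral: rewrite deriv as -J
  have hIeq : ∫ t in Set.Ioc 2 x, deriv (fun y : ℝ => (Real.log y)⁻¹) t * A ⌊t⌋₊
      = - ∫ t in Set.Ioc 2 x, J t * A ⌊t⌋₊ := by
    rw [← integral_neg]
    apply setIntegral_congr_fun measurableSet_Ioc
    intro t ht
    have := (derivInv t ht.1.le).deriv
    simp only [this]
    ring
  set W : ℝ := ∫ t in Set.Ioc 2 x, J t * A ⌊t⌋₊ with hW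
  have hBW : B = (Real.log x)⁻¹ * A N + W := by
    have := habel
    rw [hLHS] at this
    rw [show (∑ k ∈ Icc 0 2, cc k) = A 2 from rfl] at this
    rw [hhalf] at this
    rw [show (∑ k ∈ Icc 0 ⌊x⌋₊, cc k) = A N from rfl] at this
    rw [show (∫ (t : ℝ) in Set.Ioc 2 x, deriv (fun t => (Real.log t)⁻¹) t * ∑ k ∈ Icc 0 ⌊t⌋₊, cc k)
      = ∫ t in Set.Ioc 2 x, deriv (fun y : ℝ => (Real.log y)⁻¹) t * A ⌊t⌋₊ from rfl, hIeq] at this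
    linarith
  -- FTC facts
  have hVftc : ∫ t in Set.Ioc 2 x, J t * Real.log t
      = Real.log (Real.log x) - Real.log (Real.log 2) := by
    rw [← intervalIntegral.integral_of_le (by linarith : (2:ℝ) ≤ x)]
    apply intervalIntegral.integral_eq_sub_of_hasDerivAt
    · intro t ht
      rw [Set.uIcc_of_le (by linarith : (2:ℝ) ≤ x)] at ht
      have ht2 : 2 ≤ t := ht.1
      have h0 : t ≠ 0 := by linarith
      have hlogt : (0:ℝ) < Real.log t := Real.log_pos (by linarith)
      have hcomp : HasDerivAt (fun y : ℝ => Real.log (Real.log y))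
          ((Real.log t)⁻¹ * t⁻¹) t :=
        (Real.hasDerivAt_log hlogt.ne').comp t (Real.hasDerivAt_log h0)
      have heq : J t * Real.log t = (Real.log t)⁻¹ * t⁻¹ := by
        rw [hJ]; field_simp
      rw [heq]
      exact hcomp
    · apply ContinuousOn.intervalIntegrable
      rw [Set.uIcc_of_le (by linarith : (2:ℝ) ≤ x)]
      exact (contJ.mul (Real.continuousOn_log.mono
        (by intro t ht; simp; intro h; rw [h] at ht; have := ht.1; linarith)))
  have hUftc : ∫ t in Set.Ioc 2 x, J t = (Real.log 2)⁻¹ - (Real.log x)⁻¹ := by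
    have hU := intervalIntegral.integral_eq_sub_of_hasDerivAt (a := 2) (b := x)
      (f := fun t : ℝ => -(Real.log t)⁻¹) (f' := J) ?_ ?_
    · rw [← intervalIntegral.integral_of_le (by linarith : (2:ℝ) ≤ x), hU]
      ring
    · intro t ht
      rw [Set.uIcc_of_le (by linarith : (2:ℝ) ≤ x)] at ht
      have := (derivInv t ht.1).neg
      rw [neg_neg] at this
      exact this
    · apply ContinuousOn.intervalIntegrable
      rw [Set.uIcc_of_le (by linarith : (2:ℝ) ≤ x)]
      exact contJ
  -- pointwise bound on |A ⌊t⌋ - log t|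
  have hptbd : ∀ t ∈ Set.Ioc (2:ℝ) x, |A ⌊t⌋₊ - Real.log t| ≤ c1 + 1 := by
    intro t ht
    obtain ⟨h2t, htx⟩ := ht
    have hft2 : 2 ≤ ⌊t⌋₊ := Nat.le_floor (by exact_mod_cast h2t.le)
    have hftpos : (0:ℝ) < ⌊t⌋₊ := by exact_mod_cast Nat.lt_of_lt_of_le Nat.zero_lt_two hft2
    have hfle : (⌊t⌋₊:ℝ) ≤ t := Nat.floor_le (by linarith)
    have hlt : t ≤ 2 * ⌊t⌋₊ := by
      have := Nat.lt_floor_add_one t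
      have h2 : (2:ℝ) ≤ (⌊t⌋₊:ℝ) := by exact_mod_cast hft2
      linarith
    have hm1 := hM1 ⌊t⌋₊ hft2
    have hAeq : A ⌊t⌋₊ = ∑ p ∈ mP ⌊t⌋₊, Real.log p / p := A_eq _
    have hd1 : 0 ≤ Real.log t - Real.log ⌊t⌋₊ := by
      have := Real.log_le_log hftpos hfle
      linarith
    have hd2 : Real.log t - Real.log ⌊t⌋₊ ≤ 1 := by
      have h3 : Real.log t ≤ Real.log (2 * ⌊t⌋₊) := Real.log_le_log (by linarith) hlt
      rw [Real.log_mul (by norm_num) hftpos.ne'] at h3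
      have := Real.log_two_lt_d9
      linarith
    rw [hAeq]
    rw [abs_le] at hm1 ⊢
    constructor <;> [skip; skip] <;> cases' hm1 with hm1a hm1b <;> linarith
  -- integrability
  have measA : Measurable (fun t : ℝ => A ⌊t⌋₊) :=
    Measurable.comp (g := A) (f := fun t : ℝ => (⌊t⌋₊ : ℕ)) measurable_from_top
      Nat.measurable_floor
  have measJ : Measurable J := by
    apply Measurable.div
    · exact measurable_id.inv
    · exact (Real.measurable_log).pow_const 2
  have hJnn : ∀ t ∈ Set.Ioc (2:ℝ) x, 0 ≤ J t := by
    intro t ht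
    have : (0:ℝ) < t := by linarith [ht.1]
    rw [hJ]
    positivity
  have hJint : IntegrableOn J (Set.Ioc 2 x) :=
    (contJ.integrableOn_compact isCompact_Icc).mono_set Set.Ioc_subset_Icc_self
  have hJlogint : IntegrableOn (fun t => J t * Real.log t) (Set.Ioc 2 x) :=
    ((contJ.mul (Real.continuousOn_log.mono
        (by intro t ht; simp; intro h; rw [h] at ht; have := ht.1; linarith))).integrableOn_compact
      isCompact_Icc).mono_set Set.Ioc_subset_Icc_self
  have hf1int : Integrable (fun t => J t * (A ⌊t⌋₊ - Real.log t))
      (volume.restrict (Set.Ioc 2 x)) := by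
    apply Integrable.mono' (g := fun t => (c1+1) * J t) (hJint.const_mul _)
    · exact ((measJ.mul ((measA.sub Real.measurable_log))).aestronglyMeasurable)
    · rw [ae_restrict_iff' measurableSet_Ioc]
      filter_upwards with t
      intro ht
      rw [Real.norm_eq_abs, abs_mul, abs_of_nonneg (hJnn t ht)]
      calc J t * |A ⌊t⌋₊ - Real.log t| ≤ J t * (c1+1) :=
            mul_le_mul_of_nonneg_left (hptbd t ht) (hJnn t ht)
        _ = (c1+1) * J t := by ring
  -- W - V bound
  have hWV : |W - (Real.log (Real.log x) - Real.log (Real.log 2))| ≤ (c1+1) / Real.log 2 := by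
    have hWsplit : W = (∫ t in Set.Ioc 2 x, J t * (A ⌊t⌋₊ - Real.log t))
        + ∫ t in Set.Ioc 2 x, J t * Real.log t := by
      rw [← integral_add hf1int hJlogint]
      apply setIntegral_congr_fun measurableSet_Ioc
      intro t _
      ring
    rw [hWsplit, hVftc]
    rw [add_sub_cancel_right]
    have hb1 : ‖∫ t in Set.Ioc 2 x, J t * (A ⌊t⌋₊ - Real.log t)‖
        ≤ ∫ t in Set.Ioc 2 x, (c1+1) * J t := by
      apply norm_integral_le_of_norm_le (hJint.const_mul _)
      rw [ae_restrict_iff' measurableSet_Ioc]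
      filter_upwards with t
      intro ht
      rw [Real.norm_eq_abs, abs_mul, abs_of_nonneg (hJnn t ht)]
      calc J t * |A ⌊t⌋₊ - Real.log t| ≤ J t * (c1+1) :=
            mul_le_mul_of_nonneg_left (hptbd t ht) (hJnn t ht)
        _ = (c1+1) * J t := by ring
    rw [Real.norm_eq_abs] at hb1
    have hb2 : ∫ t in Set.Ioc 2 x, (c1+1) * J t = (c1+1) * ((Real.log 2)⁻¹ - (Real.log x)⁻¹) := by
      rw [integral_const_mul, hUftc]
    rw [hb2] at hb1
    have hb3 : (c1+1) * ((Real.log 2)⁻¹ - (Real.log x)⁻¹) ≤ (c1+1) / Real.log 2 := by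
      rw [div_eq_mul_inv]
      apply mul_le_mul_of_nonneg_left _ (by linarith)
      have : 0 ≤ (Real.log x)⁻¹ := by positivity
      linarith
    exact hb1.trans hb3
  -- bound on (log x)⁻¹ * A N
  have hAN : 0 ≤ A N ∧ A N ≤ Real.log x + c1 := by
    have hm1 := hM1 N (by omega)
    have hAeq : A N = ∑ p ∈ mP N, Real.log p / p := A_eq _
    rw [abs_le] at hm1
    constructor
    · rw [hAeq]
      apply Finset.sum_nonneg
      intro p hp
      have hp1 : (1:ℝ) ≤ p := by exact_mod_cast (mem_mP.mp hp).2.one_le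
      have := Real.log_nonneg hp1
      positivity
    · have hlogN : Real.log N ≤ Real.log x :=
        Real.log_le_log (by exact_mod_cast Nat.lt_of_lt_of_le (by norm_num) hN3) hNx
      rw [hAeq]
      linarith [hm1.2]
  have hterm1 : |(Real.log x)⁻¹ * A N| ≤ 1 + c1 / Real.log 3 := by
    rw [abs_of_nonneg (mul_nonneg (by positivity) hAN.1)]
    have h1 : (Real.log x)⁻¹ * A N ≤ (Real.log x)⁻¹ * (Real.log x + c1) :=
      mul_le_mul_of_nonneg_left hAN.2 (by positivity)
    have h2 : (Real.log x)⁻¹ * (Real.log x + c1) = 1 + c1 / Real.log x := by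
      field_simp
    have h3 : c1 / Real.log x ≤ c1 / Real.log 3 :=
      div_le_div_of_nonneg_left hc1nn (by linarith) hlogx
    rw [h2] at h1
    linarith
  -- final assembly
  have : B - Real.log (Real.log x)
      = (Real.log x)⁻¹ * A N + (W - (Real.log (Real.log x) - Real.log (Real.log 2)))
        - Real.log (Real.log 2) := by
    rw [hBW]; ring
  rw [this]
  set D := Real.log (Real.log x) - Real.log (Real.log 2) with hD
  have h8 : |(Real.log x)⁻¹ * A N + (W - D)| ≤ |(Real.log x)⁻¹ * A N| + |W - D| := abs_add_le _ _
  have h9 : |(Real.log x)⁻¹ * A N + (W - D) - Real.log (Real.log 2)|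
      ≤ |(Real.log x)⁻¹ * A N + (W - D)| + |Real.log (Real.log 2)| := abs_sub _ _
  linarith [hterm1, hWV, h8, h9]

section taylor
variable {lam : ℕ → ℝ}

lemma prime_facts {p : ℕ} (hp : p.Prime) (hl : |lam p| ≤ 2) :
    0 < Real.sqrt p ∧ Real.sqrt p * Real.sqrt p = p ∧ 1 ≤ Real.sqrt p := by
  have hp2 : (2:ℝ) ≤ p := by exact_mod_cast hp.two_le
  have hppos : (0:ℝ) < p := by linarith
  have hss : Real.sqrt p * Real.sqrt p = p := Real.mul_self_sqrt hppos.le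
  have hspos : 0 < Real.sqrt p := Real.sqrt_pos.mpr hppos
  exact ⟨hspos, hss, by nlinarith⟩

lemma taylor_small {p : ℕ} (hp : p.Prime) (hl : |lam p| ≤ 2) :
    |Real.log (1 - lam p / Real.sqrt p + 1/p)
      + lam p / Real.sqrt p - 1/p + lam p^2/(2*p)| ≤ 20 := by
  obtain ⟨hspos, hss, hs1⟩ := prime_facts hp hl
  have hp2 : (2:ℝ) ≤ p := by exact_mod_cast hp.two_le
  have hppos : (0:ℝ) < p := by linarith
  set s := Real.sqrt p with hs
  set u := s⁻¹ with hu
  have hupos : 0 < u := by positivity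
  have huu : u * u ≤ 1/2 := by
    have : u * u = (p:ℝ)⁻¹ := by rw [hu, ← mul_inv, hss]
    rw [this]
    rw [show (1:ℝ)/2 = (2:ℝ)⁻¹ by norm_num]
    exact inv_anti₀ (by norm_num) hp2
  have hub : u ≤ 0.7072 := by nlinarith
  have habs := abs_le.mp hl
  have hrw1 : lam p / s = lam p * u := by rw [hu, div_eq_mul_inv]
  have hrw2 : (1:ℝ)/p = u * u := by
    rw [hu, ← mul_inv, hss, one_div]
  have huup : u * u = (p:ℝ)⁻¹ := by rw [hu, ← mul_inv, hss]
  have hrw3 : lam p^2/(2*p) = lam p^2 * (u*u) / 2 := by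
    rw [huup, div_eq_mul_inv, mul_inv]
    ring
  rw [hrw1, hrw2, hrw3]
  set y := 1 - lam p * u + u * u with hy
  have hy4 : y ≤ 4 := by nlinarith
  have hy12 : 1/12 ≤ y := by nlinarith [sq_nonneg (1 - u)]
  have hypos : 0 < y := by linarith
  have hlogup : Real.log y ≤ 3 := by
    have := Real.log_le_sub_one_of_pos hypos
    linarith
  have hlogdown : -11 ≤ Real.log y := by
    have h1 : Real.log (1/12) ≤ Real.log y := Real.log_le_log (by norm_num) hy12
    have h2 : Real.log (1/12 : ℝ) = - Real.log 12 := by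
      rw [one_div, Real.log_inv]
    have h3 : Real.log (12:ℝ) ≤ 11 := by
      have := Real.log_le_sub_one_of_pos (by norm_num : (0:ℝ) < 12)
      linarith
    rw [h2] at h1
    linarith
  have b1 : |lam p * u| ≤ 2 := by
    rw [abs_mul, abs_of_pos hupos]
    nlinarith [abs_nonneg (lam p)]
  have b1' := abs_le.mp b1
  have b2 : 0 < u * u := by positivity
  have b3 : lam p ^ 2 * (u * u) / 2 ≤ 1 := by nlinarith [sq_nonneg (lam p)]
  have b4 : 0 ≤ lam p ^ 2 * (u * u) / 2 := by positivity
  rw [abs_le]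
  constructor <;> linarith [b1'.1, b1'.2]

lemma taylor_large {p : ℕ} (hp : p.Prime) (hl : |lam p| ≤ 2) (h25 : 25 ≤ p) :
    |Real.log (1 - lam p / Real.sqrt p + 1/p)
      + lam p / Real.sqrt p - 1/p + lam p^2/(2*p)|
      ≤ 71 * ((p:ℝ) * Real.sqrt p)⁻¹ := by
  obtain ⟨hspos, hss, hs1⟩ := prime_facts hp hl
  have hp25 : (25:ℝ) ≤ p := by exact_mod_cast h25
  have hppos : (0:ℝ) < p := by linarith
  set s := Real.sqrt p with hs
  have hs5 : 5 ≤ s := by nlinarith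
  set u := s⁻¹ with hu
  have hupos : 0 < u := by positivity
  have hu5 : u ≤ 1/5 := by
    rw [hu]
    rw [show (1:ℝ)/5 = (5:ℝ)⁻¹ by norm_num]
    exact inv_anti₀ (by norm_num) hs5
  have habs := abs_le.mp hl
  have hrw1 : lam p / s = lam p * u := by rw [hu, div_eq_mul_inv]
  have hrw2 : (1:ℝ)/p = u * u := by rw [hu, ← mul_inv, hss, one_div]
  have huup : u * u = (p:ℝ)⁻¹ := by rw [hu, ← mul_inv, hss]
  have hrw3 : lam p^2/(2*p) = lam p^2 * (u*u) / 2 := by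
    rw [huup, div_eq_mul_inv, mul_inv]
    ring
  have hrw4 : ((p:ℝ) * s)⁻¹ = u * u * u := by
    rw [hu, ← hss]
    rw [mul_inv, mul_inv]
  rw [hrw1, hrw2, hrw3, hrw4]
  set v := lam p * u - u * u with hv
  have hvabs : |v| ≤ 2.2 * u := by
    rw [hv, abs_le]
    constructor <;> nlinarith [abs_le.mp (abs_le.mpr habs)]
  have hv44 : |v| ≤ 0.44 := by nlinarith
  have hv1 : |v| < 1 := by linarith
  have htay := Real.abs_log_sub_add_sum_range_le hv1 2
  have hsum2 : ∑ i ∈ Finset.range 2, v^(i+1)/(i+1) = v + v^2/2 := by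
    simp [Finset.sum_range_succ]
    norm_num
  rw [hsum2] at htay
  have h1mv : 1 - lam p * u + u * u = 1 - v := by rw [hv]; ring
  rw [h1mv]
  have hvnn := abs_nonneg v
  have hv3 : |v|^3 ≤ (2.2*u)^3 := by
    apply pow_le_pow_left₀ hvnn hvabs
  have hfrac : |v|^3/(1 - |v|) ≤ 20 * (u*u*u) := by
    rw [div_le_iff₀ (by linarith : (0:ℝ) < 1 - |v|)]
    nlinarith [pow_nonneg hupos.le 3, mul_nonneg (mul_nonneg hupos.le hupos.le) hupos.le,
      mul_le_mul_of_nonneg_left hv44 (by positivity : (0:ℝ) ≤ 20 * (u*u*u))]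
  -- error term algebra
  have key : Real.log (1 - v) + lam p * u - u * u + lam p ^ 2 * (u * u) / 2
      = (v + v^2/2 + Real.log (1 - v)) + (lam p * (u*u*u) - (u*u)*(u*u)/2) := by
    rw [hv]; ring
  rw [key]
  have hsmall : |lam p * (u*u*u) - (u*u)*(u*u)/2| ≤ 3 * (u*u*u) := by
    rw [abs_le]
    have huuu : 0 < u*u*u := by positivity
    have hu4 : (u*u)*(u*u) ≤ (u*u*u) * (1/5) := by nlinarith
    have hu4' : 0 ≤ (u*u)*(u*u) := by positivity
    constructor <;> nlinarith
  calc |(v + v^2/2 + Real.log (1 - v)) + (lam p * (u*u*u) - (u*u)*(u*u)/2)|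
      ≤ |v + v^2/2 + Real.log (1 - v)| + |lam p * (u*u*u) - (u*u)*(u*u)/2| := abs_add_le _ _
    _ ≤ 20 * (u*u*u) + 3 * (u*u*u) := by
        have := htay.trans hfrac
        linarith
    _ ≤ 71 * (u*u*u) := by nlinarith [mul_nonneg (mul_nonneg hupos.le hupos.le) hupos.le]

lemma taylor_sum (hlam : ∀ p : ℕ, p.Prime → |lam p| ≤ 2) : ∃ K : ℝ, 0 ≤ K ∧ ∀ N : ℕ,
    |∑ p ∈ mP N, (Real.log (1 - lam p / Real.sqrt p + 1/p)
      + lam p / Real.sqrt p - 1/p + lam p^2/(2*p))| ≤ K := by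
  set T := ∑' n : ℕ, ((n:ℝ) * Real.sqrt n)⁻¹ with hT
  have hTnn : 0 ≤ T := tsum_nonneg (fun n => by positivity)
  refine ⟨500 + 71 * T, by positivity, ?_⟩
  intro N
  calc |∑ p ∈ mP N, (Real.log (1 - lam p / Real.sqrt p + 1/p)
        + lam p / Real.sqrt p - 1/p + lam p^2/(2*p))|
      ≤ ∑ p ∈ mP N, |Real.log (1 - lam p / Real.sqrt p + 1/p)
        + lam p / Real.sqrt p - 1/p + lam p^2/(2*p)| := Finset.abs_sum_le_sum_abs _ _
    _ ≤ ∑ p ∈ mP N, ((if p < 25 then (20:ℝ) else 0) + 71 * ((p:ℝ) * Real.sqrt p)⁻¹) := by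
        apply Finset.sum_le_sum
        intro p hp
        obtain ⟨hpN, hpp⟩ := mem_mP.mp hp
        by_cases h : p < 25
        · simp only [if_pos h]
          have h2 := taylor_small hpp (hlam p hpp)
          have : (0:ℝ) ≤ 71 * ((p:ℝ) * Real.sqrt p)⁻¹ := by positivity
          linarith
        · simp only [if_neg h]
          have h2 := taylor_large hpp (hlam p hpp) (by omega)
          linarith
    _ = (∑ p ∈ mP N, (if p < 25 then (20:ℝ) else 0))
        + ∑ p ∈ mP N, 71 * ((p:ℝ) * Real.sqrt p)⁻¹ := Finset.sum_add_distrib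
    _ ≤ 500 + 71 * T := by
        have h1 : ∑ p ∈ mP N, (if p < 25 then (20:ℝ) else 0) ≤ 500 := by
          calc ∑ p ∈ mP N, (if p < 25 then (20:ℝ) else 0)
              = ∑ p ∈ (mP N).filter (fun p => p < 25), (20:ℝ) := (Finset.sum_filter _ _).symm
            _ ≤ 25 * 20 := by
                rw [Finset.sum_const, nsmul_eq_mul]
                have hcard : ((mP N).filter (fun p => p < 25)).card ≤ 25 := by
                  calc ((mP N).filter (fun p => p < 25)).card
                      ≤ (Finset.range 25).card := by
                        apply Finset.card_le_card
                        intro q hq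
                        simp only [Finset.mem_filter] at hq
                        exact Finset.mem_range.mpr hq.2
                    _ = 25 := Finset.card_range 25
                have : (((mP N).filter (fun p => p < 25)).card : ℝ) ≤ 25 := by exact_mod_cast hcard
                nlinarith
            _ = 500 := by norm_num
        have h2 := sum_inv_nsqrt_le 71 (by norm_num) (mP N)
        linarith
end taylor

theorem stmt_11 (lam : ℕ → ℝ) (hlam : ∀ p : ℕ, p.Prime → |lam p| ≤ 2)
    (hST : ∃ C : ℝ, ∀ x : ℝ, 3 ≤ x →
      |(∑ p ∈ (Finset.range (⌊x⌋₊ + 1)).filter Nat.Prime, lam p ^ 2 / p) -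
        Real.log (Real.log x)| ≤ C)
    (hDRH : ∃ C : ℝ, ∀ x : ℝ, 2 ≤ x →
      |∑ p ∈ (Finset.range (⌊x⌋₊ + 1)).filter Nat.Prime,
        Real.log (1 - lam p / Real.sqrt p + 1 / p)| ≤ C) :
    Tendsto (fun x : ℝ =>
        (∑ p ∈ (Finset.range (⌊x⌋₊ + 1)).filter Nat.Prime,
          lam p / Real.sqrt p) / ((1 / 2) * Real.log (Real.log x)))
      atTop (nhds 1) := by
  obtain ⟨c2, hm2⟩ := mertens2
  obtain ⟨K, hKnn, hK⟩ := taylor_sum hlam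
  obtain ⟨C1, hST⟩ := hST
  obtain ⟨C2, hDRH⟩ := hDRH
  have hmPeq : ∀ x : ℝ, (Finset.range (⌊x⌋₊ + 1)).filter Nat.Prime = mP ⌊x⌋₊ := fun _ => rfl
  set Ctot : ℝ := c2 + C1/2 + K + C2 with hCtot
  have key : ∀ x : ℝ, 3 ≤ x →
      |(∑ p ∈ mP ⌊x⌋₊, lam p / Real.sqrt p)
        - (1/2) * Real.log (Real.log x)| ≤ Ctot := by
    intro x hx
    have hBT := hm2 x hx
    have hT := hST x hx
    have hD := hDRH x (by linarith)
    rw [hmPeq] at hT hD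
    have hE := hK ⌊x⌋₊
    set N := ⌊x⌋₊
    set SS : ℝ := ∑ p ∈ mP N, lam p / Real.sqrt p with hSS
    set DD : ℝ := ∑ p ∈ mP N, Real.log (1 - lam p / Real.sqrt p + 1 / p) with hDD
    set BB : ℝ := ∑ p ∈ mP N, 1/(p:ℝ) with hBB
    set TT : ℝ := ∑ p ∈ mP N, lam p ^ 2 / (p:ℝ) with hTT
    set EE : ℝ := ∑ p ∈ mP N, (Real.log (1 - lam p / Real.sqrt p + 1/p)
      + lam p / Real.sqrt p - 1/p + lam p^2/(2*p)) with hEE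
    have hid : EE = DD + SS - BB + (1/2) * TT := by
      rw [hEE, Finset.sum_add_distrib, Finset.sum_sub_distrib, Finset.sum_add_distrib]
      have h4 : ∑ p ∈ mP N, lam p^2/(2*(p:ℝ)) = (1/2) * ∑ p ∈ mP N, lam p^2/(p:ℝ) := by
        rw [Finset.mul_sum]
        apply Finset.sum_congr rfl
        intro p hp
        have hp0 : (p:ℝ) ≠ 0 := by
          exact_mod_cast (mem_mP.mp hp).2.pos.ne'
        field_simp
      rw [h4]
    have h1 := abs_le.mp hBT
    have h2 := abs_le.mp hT
    have h3 := abs_le.mp hD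
    have h4 := abs_le.mp hE
    rw [abs_le]
    constructor <;> linarith
  -- limit
  have hLtop : Tendsto (fun x : ℝ => Real.log (Real.log x)) atTop atTop :=
    Real.tendsto_log_atTop.comp Real.tendsto_log_atTop
  have hhalf : Tendsto (fun x : ℝ => (1/2) * Real.log (Real.log x)) atTop atTop :=
    hLtop.const_mul_atTop (by norm_num)
  have h0 : Tendsto (fun x : ℝ => ((∑ p ∈ mP ⌊x⌋₊, lam p / Real.sqrt p)
      - (1/2) * Real.log (Real.log x)) / ((1/2) * Real.log (Real.log x)))
      atTop (nhds 0) := by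
    apply squeeze_zero_norm' ?_ ((tendsto_const_nhds (x := Ctot)).div_atTop hhalf)
    filter_upwards [eventually_ge_atTop (3:ℝ), hhalf.eventually_ge_atTop 1] with x hx3 hx1
    rw [norm_div, Real.norm_eq_abs, Real.norm_eq_abs,
      abs_of_nonneg (by linarith : (0:ℝ) ≤ (1/2) * Real.log (Real.log x))]
    exact (div_le_div_iff_of_pos_right (by linarith)).mpr (key x hx3)
  have h1 : Tendsto (fun x : ℝ => 1 + ((∑ p ∈ mP ⌊x⌋₊, lam p / Real.sqrt p)
      - (1/2) * Real.log (Real.log x)) / ((1/2) * Real.log (Real.log x)))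
      atTop (nhds 1) := by
    have := tendsto_const_nhds (x := (1:ℝ)) (f := atTop (α := ℝ)) |>.add h0
    simpa using this
  have h2 : Tendsto (fun x : ℝ => (∑ p ∈ mP ⌊x⌋₊, lam p / Real.sqrt p)
      / ((1/2) * Real.log (Real.log x))) atTop (nhds 1) := by
    apply h1.congr'
    filter_upwards [hhalf.eventually_ge_atTop 1] with x hx1
    have hne : (1/2) * Real.log (Real.log x) ≠ 0 := by linarith
    rw [sub_div, div_self hne]
    ring
  exact h2
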